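/- arXiv:1810.00239 — 3 statements merged into one kernel-verified Lean document; each statement's English description precedes it below -/
import Mathlib

section
/- For every v, w ∈ V, the operators L_v and L_w on the Clifford algebra Cl(Q) anticommute: L_v ∘ L_w + L_w ∘ L_v = 0 (in particular L_v ∘ L_v = 0), so that v ↦ L_v induces an action of the exterior (Grassmann) algebra Λ(V) on Cl(Q). -/
open CliffordAlgebra

/-- For every `v, w ∈ V`, the operators `L_v` and `L_w` on the Clifford
algebra `Cl(Q)` anticommute: `L_v ∘ L_w + L_w ∘ L_v = 0` (in particular `L_v ∘ L_v = 0`). -/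
theorem clifford_L_anticommute
    {R : Type*} [CommRing R] [Invertible (2 : R)]
    {V : Type*} [AddCommGroup V] [Module R V] (Q : QuadraticForm R V)
    (L : V → Module.End R (CliffordAlgebra Q))
    (hL : ∀ (v : V) (i : ZMod 2) (a : CliffordAlgebra Q), a ∈ evenOdd Q i →
      L v a = ⅟(2 : R) • (ι Q v * a + (-1 : CliffordAlgebra Q) ^ i.val * (a * ι Q v)))
    (v w : V) :
    L v * L w + L w * L v = 0 ∧ L v * L v = 0 := by
  have key : ∀ (v w : V) (a : CliffordAlgebra Q), L v (L w a) + L w (L v a) = 0 := by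
    intro v w a
    induction a using DirectSum.Decomposition.inductionOn (ℳ := evenOdd Q) with
    | zero => simp
    | add x y hx hy =>
      have := congrArg₂ (· + ·) hx hy
      simpa [map_add, add_add_add_comm] using this
    | @homogeneous i m =>
      obtain ⟨a, ha⟩ := m
      have hc : (ι Q v * ι Q w + ι Q w * ι Q v) * a = a * (ι Q v * ι Q w + ι Q w * ι Q v) := by
        rw [ι_mul_ι_add_swap]
        exact Algebra.commutes (QuadraticMap.polar Q v w) a
      have hsmul : ∀ (z : CliffordAlgebra Q), z = 0 → ⅟(2:R) • ⅟(2:R) • z = 0 :=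
        fun z hz => by rw [hz, smul_zero, smul_zero]
      have hval1 : ((1 : ZMod 2)).val = 1 := rfl
      fin_cases i
      · -- i = 0
        have ha0 : a ∈ evenOdd Q 0 := ha
        have hw0 : L w a = ⅟(2:R) • (ι Q w * a + a * ι Q w) := by
          have := hL w 0 a ha0; simpa using this
        have hv0 : L v a = ⅟(2:R) • (ι Q v * a + a * ι Q v) := by
          have := hL v 0 a ha0; simpa using this
        have hs : ι Q w * a + a * ι Q w ∈ evenOdd Q 1 := by
          refine add_mem ?_ ?_
          · simpa using SetLike.mul_mem_graded (ι_mem_evenOdd_one Q w) ha0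
          · simpa using SetLike.mul_mem_graded ha0 (ι_mem_evenOdd_one Q w)
        have ht : ι Q v * a + a * ι Q v ∈ evenOdd Q 1 := by
          refine add_mem ?_ ?_
          · simpa using SetLike.mul_mem_graded (ι_mem_evenOdd_one Q v) ha0
          · simpa using SetLike.mul_mem_graded ha0 (ι_mem_evenOdd_one Q v)
        have hvs : L v (ι Q w * a + a * ι Q w)
            = ⅟(2:R) • (ι Q v * (ι Q w * a + a * ι Q w) - (ι Q w * a + a * ι Q w) * ι Q v) := by
          have := hL v 1 _ hs
          simpa [hval1, sub_eq_add_neg] using this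
        have hwt : L w (ι Q v * a + a * ι Q v)
            = ⅟(2:R) • (ι Q w * (ι Q v * a + a * ι Q v) - (ι Q v * a + a * ι Q v) * ι Q w) := by
          have := hL w 1 _ ht
          simpa [hval1, sub_eq_add_neg] using this
        rw [hw0, hv0, map_smul, map_smul, hvs, hwt, ← smul_add, ← smul_add]
        apply hsmul
        linear_combination (norm := noncomm_ring) hc
      · -- i = 1
        have ha1 : a ∈ evenOdd Q 1 := ha
        have hw1 : L w a = ⅟(2:R) • (ι Q w * a - a * ι Q w) := by
          have := hL w 1 a ha1; simpa [hval1, sub_eq_add_neg] using this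
        have hv1 : L v a = ⅟(2:R) • (ι Q v * a - a * ι Q v) := by
          have := hL v 1 a ha1; simpa [hval1, sub_eq_add_neg] using this
        have hs : ι Q w * a - a * ι Q w ∈ evenOdd Q 0 := by
          refine sub_mem ?_ ?_
          · simpa [show (1 : ZMod 2) + 1 = 0 from rfl] using SetLike.mul_mem_graded (ι_mem_evenOdd_one Q w) ha1
          · simpa [show (1 : ZMod 2) + 1 = 0 from rfl] using SetLike.mul_mem_graded ha1 (ι_mem_evenOdd_one Q w)
        have ht : ι Q v * a - a * ι Q v ∈ evenOdd Q 0 := by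
          refine sub_mem ?_ ?_
          · simpa [show (1 : ZMod 2) + 1 = 0 from rfl] using SetLike.mul_mem_graded (ι_mem_evenOdd_one Q v) ha1
          · simpa [show (1 : ZMod 2) + 1 = 0 from rfl] using SetLike.mul_mem_graded ha1 (ι_mem_evenOdd_one Q v)
        have hvs : L v (ι Q w * a - a * ι Q w)
            = ⅟(2:R) • (ι Q v * (ι Q w * a - a * ι Q w) + (ι Q w * a - a * ι Q w) * ι Q v) := by
          have := hL v 0 _ hs
          simpa using this
        have hwt : L w (ι Q v * a - a * ι Q v)
            = ⅟(2:R) • (ι Q w * (ι Q v * a - a * ι Q v) + (ι Q v * a - a * ι Q v) * ι Q w) := by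
          have := hL w 0 _ ht
          simpa using this
        rw [hw1, hv1, map_smul, map_smul, hvs, hwt, ← smul_add, ← smul_add]
        apply hsmul
        linear_combination (norm := noncomm_ring) hc
  have h1 : L v * L w + L w * L v = 0 := by
    ext a
    simpa [Module.End.mul_apply] using key v w a
  refine ⟨h1, ?_⟩
  have h2 : (2 : R) • (L v * L v) = 0 := by
    rw [two_smul]
    ext a
    simpa [Module.End.mul_apply] using key v v a
  calc L v * L v = ⅟(2:R) • ((2:R) • (L v * L v)) := by
        rw [smul_smul, invOf_mul_self, one_smul]
    _ = 0 := by rw [h2, smul_zero]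
end

section
/- The R-linear map φ : Λ(V) → Cl(Q) defined by φ(x) = ρ(x)(1), where ρ : Λ(V) → End_R(Cl(Q)) is the algebra homomorphism induced by v ↦ L_v (well-defined since the L_v anticommute and square to zero), is an R-linear isomorphism sending 1 to 1; in particular the action ρ of the Grassmann algebra on the Clifford algebra is faithful. -/
open CliffordAlgebra

section Aux

variable {R : Type*} [CommRing R] {V : Type*} [AddCommGroup V] [Module R V]
  (Q : QuadraticForm R V)

/-- The "super-commutation" identity: for any `a`,
`involute a * ι v = ι v * a - (polar Q v ·) ⌋ a`. -/
lemma aux_involute_mul_ι (v : V) (a : CliffordAlgebra Q) :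
    involute a * ι Q v = ι Q v * a - contractLeft (Q.polarBilin v) a := by
  induction a using CliffordAlgebra.left_induction with
  | algebraMap r =>
      rw [AlgHom.commutes, contractLeft_algebraMap, sub_zero, Algebra.commutes]
  | add x y hx hy =>
      rw [map_add, add_mul, hx, hy, map_add, mul_add]
      abel
  | ι_mul x m hx =>
      rw [map_mul, involute_ι, neg_mul, neg_mul, mul_assoc, hx, contractLeft_ι_mul,
        ← mul_assoc, ι_mul_ι_comm, QuadraticMap.polarBilin_apply_apply]
      simp only [mul_sub, sub_mul, ← Algebra.smul_def, mul_assoc]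
      abel

end Aux

/-- The map `φ : Λ(V) → Cl(Q)`, `φ(x) = ρ(x)(1)`, where `ρ` is the algebra
homomorphism `Λ(V) → End_R(Cl(Q))` induced by `v ↦ L_v`, is an `R`-linear isomorphism sending
`1` to `1`; in particular the action `ρ` of the Grassmann algebra on the Clifford algebra is
faithful. -/
theorem clifford_grassmann_module_iso
    {R : Type*} [CommRing R] [Invertible (2 : R)]
    {V : Type*} [AddCommGroup V] [Module R V] (Q : QuadraticForm R V)
    (L : V →ₗ[R] Module.End R (CliffordAlgebra Q))
    (hL : ∀ (v : V) (i : ZMod 2) (a : CliffordAlgebra Q), a ∈ evenOdd Q i →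
      L v a = ⅟(2 : R) • (ι Q v * a + (-1 : CliffordAlgebra Q) ^ i.val * (a * ι Q v)))
    (ρ : ExteriorAlgebra R V →ₐ[R] Module.End R (CliffordAlgebra Q))
    (hρ : ∀ v : V, ρ (ExteriorAlgebra.ι R v) = L v) :
    (∃ φ : ExteriorAlgebra R V ≃ₗ[R] CliffordAlgebra Q,
        (∀ x : ExteriorAlgebra R V, φ x = ρ x 1) ∧ φ 1 = 1) ∧
    Function.Injective ρ := by
  have hQ : (QuadraticMap.associated (R := R) Q).toQuadraticMap = Q - 0 := by
    rw [QuadraticMap.toQuadraticMap_associated]; exact (sub_zero Q).symm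
  -- the one-variable step
  have step : ∀ (v : V) (i : ZMod 2) (x : ExteriorAlgebra R V),
      x ∈ evenOdd (0 : QuadraticForm R V) i →
      ρ x 1 ∈ evenOdd Q i → ρ x 1 = changeForm hQ x →
      ρ (ExteriorAlgebra.ι R v * x) 1 ∈ evenOdd Q (1 + i) ∧
        ρ (ExteriorAlgebra.ι R v * x) 1 = changeForm hQ (ExteriorAlgebra.ι R v * x) := by
    intro v i x hx hmem hval
    set a : CliffordAlgebra Q := ρ x 1 with ha
    have h1 : ρ (ExteriorAlgebra.ι R v * x) 1 = L v a := by
      rw [map_mul, Module.End.mul_apply, hρ]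
    have hi : i = 0 ∨ i = 1 := by fin_cases i <;> [exact Or.inl rfl; exact Or.inr rfl]
    have hsign : (-1 : CliffordAlgebra Q) ^ i.val * (a * ι Q v) = involute a * ι Q v := by
      rcases hi with rfl | rfl
      · rw [involute_eq_of_mem_even hmem, show ZMod.val (0 : ZMod 2) = 0 from rfl,
          pow_zero, one_mul]
      · rw [involute_eq_of_mem_odd hmem, show ZMod.val (1 : ZMod 2) = 1 from rfl,
          pow_one, neg_one_mul, neg_mul]
    have h2 : L v a = ⅟(2 : R) • (ι Q v * a + involute a * ι Q v) := by
      rw [hL v i a hmem, hsign]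
    constructor
    · rw [h1, h2]
      refine Submodule.smul_mem _ _ (Submodule.add_mem _ ?_ ?_)
      · exact SetLike.mul_mem_graded (ι_mem_evenOdd_one Q v) hmem
      · have : involute a * ι Q v ∈ evenOdd Q (i + 1) :=
          SetLike.mul_mem_graded ((involute_mem_evenOdd_iff Q).mpr hmem) (ι_mem_evenOdd_one Q v)
        rwa [add_comm] at this
    · have h3 : contractLeft (Q := Q) (Q.polarBilin v) a
          = (2 : R) • contractLeft (Q := Q) (QuadraticMap.associated (R := R) Q v) a := by
        have h4 : Q.polarBilin v = (2 : R) • QuadraticMap.associated (R := R) Q v := by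
          rw [← QuadraticMap.two_nsmul_associated R Q]
          ext w
          simp only [LinearMap.smul_apply]
          rw [two_smul, two_smul]
        rw [h4, map_smul, LinearMap.smul_apply]
      rw [h1, h2, aux_involute_mul_ι, h3, changeForm_ι_mul, ← hval]
      rw [← add_sub_assoc, ← two_smul R (ι Q v * a), smul_sub, invOf_smul_smul,
        invOf_smul_smul]
  -- the key claim on homogeneous elements
  have keyEven : ∀ (x : ExteriorAlgebra R V), x ∈ evenOdd (0 : QuadraticForm R V) 0 →
      ρ x 1 ∈ evenOdd Q 0 ∧ ρ x 1 = changeForm hQ x := by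
    intro x hx
    induction x, hx using CliffordAlgebra.even_induction with
    | algebraMap r =>
        have h : ρ (algebraMap R _ r) 1 = algebraMap R _ r := by
          rw [AlgHom.commutes, Module.algebraMap_end_apply,
            Algebra.algebraMap_eq_smul_one]
        constructor
        · rw [h]; exact SetLike.algebraMap_mem_graded _ r
        · rw [h, changeForm_algebraMap]
    | add x y hx hy ihx ihy =>
        rw [map_add, LinearMap.add_apply]
        exact ⟨Submodule.add_mem _ ihx.1 ihy.1, by rw [map_add, ihx.2, ihy.2]⟩
    | ι_mul_ι_mul m₁ m₂ x hx ih =>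
        have s1 := step m₂ 0 x hx ih.1 ih.2
        have s2 := step m₁ (1 + 0) _ (SetLike.mul_mem_graded (ι_mem_evenOdd_one _ m₂) hx)
          s1.1 s1.2
        rw [mul_assoc]
        have h10 : (1 + (1 + 0) : ZMod 2) = 0 := by decide
        rw [h10] at s2
        exact s2
  have keyOdd : ∀ (x : ExteriorAlgebra R V), x ∈ evenOdd (0 : QuadraticForm R V) 1 →
      ρ x 1 ∈ evenOdd Q 1 ∧ ρ x 1 = changeForm hQ x := by
    intro x hx
    induction x, hx using CliffordAlgebra.odd_induction with
    | ι v =>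
        have h1 : (1 : ExteriorAlgebra R V) ∈ evenOdd (0 : QuadraticForm R V) 0 :=
          SetLike.one_mem_graded _
        have h0m : (ρ 1 : Module.End R (CliffordAlgebra Q)) 1 ∈ evenOdd Q 0 := by
          rw [map_one ρ, Module.End.one_apply]; exact SetLike.one_mem_graded _
        have h0v : (ρ 1 : Module.End R (CliffordAlgebra Q)) 1 = changeForm hQ 1 := by
          rw [map_one ρ, Module.End.one_apply, changeForm_one]
        have s := step v 0 1 h1 h0m h0v
        rw [mul_one] at s
        have h10 : (1 + 0 : ZMod 2) = 1 := by decide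
        rwa [h10] at s
    | add x y hx hy ihx ihy =>
        rw [map_add, LinearMap.add_apply]
        exact ⟨Submodule.add_mem _ ihx.1 ihy.1, by rw [map_add, ihx.2, ihy.2]⟩
    | ι_mul_ι_mul m₁ m₂ x hx ih =>
        have s1 := step m₂ 1 x hx ih.1 ih.2
        have s2 := step m₁ (1 + 1) _ (SetLike.mul_mem_graded (ι_mem_evenOdd_one _ m₂) hx)
          s1.1 s1.2
        rw [mul_assoc]
        have h11 : (1 + (1 + 1) : ZMod 2) = 1 := by decide
        rw [h11] at s2
        exact s2
  have key : ∀ (i : ZMod 2) (x : ExteriorAlgebra R V),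
      x ∈ evenOdd (0 : QuadraticForm R V) i → ρ x 1 = changeForm hQ x := by
    intro i x hx
    have hi : i = 0 ∨ i = 1 := by fin_cases i <;> [exact Or.inl rfl; exact Or.inr rfl]
    rcases hi with rfl | rfl
    · exact (keyEven x hx).2
    · exact (keyOdd x hx).2
  -- extend to all elements
  have all : ∀ x : ExteriorAlgebra R V, ρ x 1 = changeForm hQ x := by
    intro x
    have htop : x ∈ (⊤ : Submodule R (ExteriorAlgebra R V)) := Submodule.mem_top
    rw [← (DirectSum.Decomposition.isInternal
      (evenOdd (0 : QuadraticForm R V))).submodule_iSup_eq_top] at htop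
    refine Submodule.iSup_induction (motive := fun y => (ρ y : Module.End R (CliffordAlgebra Q)) 1
        = changeForm hQ y) _ htop (fun i y hy => key i y hy) ?_ fun y z ihy ihz => ?_
    · show (ρ 0 : Module.End R (CliffordAlgebra Q)) 1 = changeForm hQ 0
      rw [map_zero, LinearMap.zero_apply, map_zero]
    · show (ρ (y + z) : Module.End R (CliffordAlgebra Q)) 1 = changeForm hQ (y + z)
      rw [map_add, LinearMap.add_apply, map_add]
      exact congrArg₂ (· + ·) ihy ihz
  refine ⟨⟨(changeFormEquiv hQ : ExteriorAlgebra R V ≃ₗ[R] CliffordAlgebra Q), ?_, ?_⟩, ?_⟩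
  · intro x
    rw [changeFormEquiv_apply, all x]
  · rw [changeFormEquiv_apply, changeForm_one]
  · intro x y h
    have hxy : (ρ x : Module.End R (CliffordAlgebra Q)) 1 = ρ y 1 := by rw [h]
    rw [all x, all y] at hxy
    exact (changeFormEquiv hQ).injective hxy
end

section
/- Although φ is not an algebra isomorphism, the exterior and interior products are recovered from the Clifford product by projections: for every ξ ∈ Λ^p(V) and y ∈ Cl^q(Q) one has Π^{p+q}(φ(ξ)·y) = L_ξ(y) and Π^{q−p}(φ(ξ)·y) = D_ξ(y), where · denotes the Clifford product, L_ξ (resp. D_ξ) denotes the image of ξ under the algebra homomorphism Λ(V) → End_R(Cl(Q)) induced by v ↦ L_v (resp. v ↦ D_v). -/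
open CliffordAlgebra

/-- The linear map `φ : Λ(V) → Cl(Q)`, `φ(x) = ρL(x)(1)`, bundled as a linear map. -/
noncomputable def cliffordPhi
    {R : Type*} [CommRing R] {V : Type*} [AddCommGroup V] [Module R V]
    {Q : QuadraticForm R V}
    (ρL : ExteriorAlgebra R V →ₐ[R] Module.End R (CliffordAlgebra Q)) :
    ExteriorAlgebra R V →ₗ[R] CliffordAlgebra Q :=
  (LinearMap.applyₗ (1 : CliffordAlgebra Q)).comp ρL.toLinearMap

/-- The component `Cl^j(Q) := φ(Λ^j(V))` of the Clifford algebra. -/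
noncomputable def cliffordComponent
    {R : Type*} [CommRing R] {V : Type*} [AddCommGroup V] [Module R V]
    {Q : QuadraticForm R V}
    (ρL : ExteriorAlgebra R V →ₐ[R] Module.End R (CliffordAlgebra Q)) (j : ℕ) :
    Submodule R (CliffordAlgebra Q) :=
  Submodule.map (cliffordPhi ρL)
    (LinearMap.range (ExteriorAlgebra.ι R : V →ₗ[R] ExteriorAlgebra R V) ^ j)

section Aux
variable {R : Type*} [CommRing R] [Invertible (2 : R)]
    {V : Type*} [AddCommGroup V] [Module R V]
    {Q : QuadraticForm R V}
    {L D : V →ₗ[R] Module.End R (CliffordAlgebra Q)}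
    (hL : ∀ (v : V) (i : ZMod 2) (a : CliffordAlgebra Q), a ∈ evenOdd Q i →
      L v a = ⅟(2 : R) • (ι Q v * a + (-1 : CliffordAlgebra Q) ^ i.val * (a * ι Q v)))
    (hD : ∀ (v : V) (i : ZMod 2) (a : CliffordAlgebra Q), a ∈ evenOdd Q i →
      D v a = ⅟(2 : R) • (ι Q v * a - (-1 : CliffordAlgebra Q) ^ i.val * (a * ι Q v)))
    {ρL ρD : ExteriorAlgebra R V →ₐ[R] Module.End R (CliffordAlgebra Q)}
    (hρL : ∀ v : V, ρL (ExteriorAlgebra.ι R v) = L v)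
    (hρD : ∀ v : V, ρD (ExteriorAlgebra.ι R v) = D v)

local notation "Λι" => (LinearMap.range (ExteriorAlgebra.ι R : V →ₗ[R] ExteriorAlgebra R V))

/-- ℤ-indexed components -/
noncomputable def Cz (ρL : ExteriorAlgebra R V →ₐ[R] Module.End R (CliffordAlgebra Q))
    (i : ℤ) : Submodule R (CliffordAlgebra Q) :=
  if 0 ≤ i then cliffordComponent ρL i.toNat else ⊥

omit [Invertible (2:R)] in
theorem phi_apply (x : ExteriorAlgebra R V) : cliffordPhi ρL x = ρL x 1 := rfl

include hρL in
omit [Invertible (2:R)] in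
theorem L_phi (v : V) (η : ExteriorAlgebra R V) :
    L v (cliffordPhi ρL η) = cliffordPhi ρL (ExteriorAlgebra.ι R v * η) := by
  rw [phi_apply, phi_apply, map_mul, hρL]; rfl

include hρL in
omit [Invertible (2:R)] in
theorem L_mem_comp {v : V} {j : ℕ} {y : CliffordAlgebra Q}
    (hy : y ∈ cliffordComponent ρL j) : L v y ∈ cliffordComponent ρL (j + 1) := by
  obtain ⟨η, hη, rfl⟩ := hy
  rw [L_phi hρL]
  exact ⟨_, (pow_succ' Λι j) ▸ Submodule.mul_mem_mul (LinearMap.mem_range_self _ v) hη, rfl⟩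

include hL in
theorem L_mem_evenOdd {v : V} {i : ZMod 2} {a : CliffordAlgebra Q} (ha : a ∈ evenOdd Q i) :
    L v a ∈ evenOdd Q (i + 1) := by
  rw [hL v i a ha]
  refine Submodule.smul_mem _ _ (Submodule.add_mem _ ?_ ?_)
  · exact add_comm i 1 ▸ SetLike.mul_mem_graded (ι_mem_evenOdd_one Q v) ha
  · have : (-1 : CliffordAlgebra Q) ^ i.val * (a * ι Q v)
        = ((-1 : R) ^ i.val) • (a * ι Q v) := by
      rw [Algebra.smul_def, map_pow, map_neg, map_one]
    rw [this]
    exact Submodule.smul_mem _ _ (SetLike.mul_mem_graded ha (ι_mem_evenOdd_one Q v))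

include hD in
theorem D_mem_evenOdd {v : V} {i : ZMod 2} {a : CliffordAlgebra Q} (ha : a ∈ evenOdd Q i) :
    D v a ∈ evenOdd Q (i + 1) := by
  rw [hD v i a ha, sub_eq_add_neg]
  refine Submodule.smul_mem _ _ (Submodule.add_mem _ ?_ ?_)
  · exact add_comm i 1 ▸ SetLike.mul_mem_graded (ι_mem_evenOdd_one Q v) ha
  · have : (-1 : CliffordAlgebra Q) ^ i.val * (a * ι Q v)
        = ((-1 : R) ^ i.val) • (a * ι Q v) := by
      rw [Algebra.smul_def, map_pow, map_neg, map_one]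
    rw [this]
    exact Submodule.neg_mem _ <|
      Submodule.smul_mem _ _ (SetLike.mul_mem_graded ha (ι_mem_evenOdd_one Q v))

include hL hρL in
theorem comp_le_evenOdd (j : ℕ) :
    cliffordComponent ρL j ≤ evenOdd Q (j : ZMod 2) := by
  induction j with
  | zero =>
    rintro y ⟨x, hx, rfl⟩
    rw [SetLike.mem_coe, pow_zero, Submodule.mem_one] at hx
    obtain ⟨r, rfl⟩ := hx
    rw [phi_apply, AlgHom.commutes]
    show (r • (1 : Module.End R (CliffordAlgebra Q))) 1 ∈ _
    simpa using Submodule.smul_mem _ r (SetLike.one_mem_graded (evenOdd Q))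
  | succ j ih =>
    rintro y ⟨x, hx, rfl⟩
    rw [SetLike.mem_coe, pow_succ'] at hx
    refine Submodule.mul_induction_on hx ?_ ?_
    · rintro m ⟨v, rfl⟩ n hn
      rw [← L_phi hρL]
      push_cast
      exact L_mem_evenOdd hL (ih ⟨n, hn, rfl⟩)
    · intro a b ha hb
      rw [map_add]; exact Submodule.add_mem _ ha hb

omit [Invertible (2:R)] in
theorem Cz_natCast (j : ℕ) : Cz (Q := Q) ρL (j : ℤ) = cliffordComponent ρL j := by
  simp [Cz]

omit [Invertible (2:R)] in
theorem Cz_neg {i : ℤ} (hi : i < 0) : Cz (Q := Q) ρL i = ⊥ := by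
  rw [Cz, if_neg (by omega)]

theorem smul2_cancel {X Y : CliffordAlgebra Q} (h : (2:R) • X = (2:R) • Y) : X = Y := by
  have := congrArg (fun t => ⅟(2:R) • t) h
  simpa [smul_smul, invOf_mul_self] using this

include hL in
theorem two_smul_L (v : V) (i : ZMod 2) (a : CliffordAlgebra Q) (ha : a ∈ evenOdd Q i) :
    (2:R) • L v a = ι Q v * a + (-1 : CliffordAlgebra Q) ^ i.val * (a * ι Q v) := by
  rw [hL v i a ha, smul_smul, mul_invOf_self, one_smul]

include hD in
theorem two_smul_D (v : V) (i : ZMod 2) (a : CliffordAlgebra Q) (ha : a ∈ evenOdd Q i) :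
    (2:R) • D v a = ι Q v * a - (-1 : CliffordAlgebra Q) ^ i.val * (a * ι Q v) := by
  rw [hD v i a ha, smul_smul, mul_invOf_self, one_smul]

include hL hD in
theorem D_L_anticomm (v w : V) (i : ZMod 2) (a : CliffordAlgebra Q) (ha : a ∈ evenOdd Q i) :
    D v (L w a) = (⅟(2:R) * QuadraticMap.polar Q v w) • a - L w (D v a) := by
  set x := ι Q v with hx
  set u := ι Q w with hu
  have hP : x * u + u * x = algebraMap R _ (QuadraticMap.polar Q v w) :=
    ι_mul_ι_add_swap v w
  set P := QuadraticMap.polar Q v w with hPdef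
  have r1 : x * (u * a) + u * (x * a) = P • a := by
    rw [← mul_assoc, ← mul_assoc, ← add_mul, hP, Algebra.smul_def]
  have r2 : a * u * x + a * x * u = P • a := by
    rw [mul_assoc, mul_assoc, ← mul_add, add_comm (u * x), hP, ← Algebra.commutes,
      ← Algebra.smul_def]
  have key : ∀ A B : CliffordAlgebra Q,
      (2:R) • ((2:R) • (A + B)) = (2:R) • ((2:R) • ((⅟(2:R) * P) • a)) → A = B →
      True := fun _ _ _ _ => trivial
  refine eq_sub_of_add_eq (smul2_cancel (smul2_cancel ?_))
  have hrhs : (2:R) • ((2:R) • ((⅟(2:R) * P) • a)) = P • a + P • a := by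
    rw [smul_smul, smul_smul, ← add_smul]
    congr 1
    have h2 : (2:R) * ⅟(2:R) = 1 := mul_invOf_self 2
    linear_combination (2 * P) * h2
  rw [hrhs]
  have hLa := L_mem_evenOdd hL (v := w) ha
  have hDa := D_mem_evenOdd hD (v := v) ha
  rw [smul_add, smul_add]
  have hi : i = 0 ∨ i = 1 := by
    have : ∀ j : ZMod 2, j = 0 ∨ j = 1 := by decide
    exact this i
  rcases hi with rfl | rfl
  · have e1 : (2:R) • L w a = u * a + a * u := by
      simpa using two_smul_L hL w 0 a ha
    have e2 : (2:R) • D v a = x * a - a * x := by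
      simpa using two_smul_D hD v 0 a ha
    have h01 : ((0:ZMod 2) + 1) = 1 := by decide
    rw [h01] at hLa hDa
    have e3 : (2:R) • ((2:R) • D v (L w a)) = x * ((2:R) • L w a) + ((2:R) • L w a) * x := by
      rw [two_smul_D hD v 1 _ hLa]
      have : ((1 : ZMod 2)).val = 1 := rfl
      rw [this, pow_one, neg_one_mul, sub_neg_eq_add, smul_add, mul_smul_comm, smul_mul_assoc]
    have e4 : (2:R) • ((2:R) • L w (D v a)) = u * ((2:R) • D v a) - ((2:R) • D v a) * u := by
      rw [two_smul_L hL w 1 _ hDa]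
      have : ((1 : ZMod 2)).val = 1 := rfl
      rw [this, pow_one, neg_one_mul, ← sub_eq_add_neg, smul_sub, mul_smul_comm, smul_mul_assoc]
    rw [e3, e4, e1, e2,
      show P • a + P • a = (x*(u*a) + u*(x*a)) + (a*u*x + a*x*u) by rw [r1, r2]]
    noncomm_ring
  · have h1v : ((1 : ZMod 2)).val = 1 := rfl
    have e1 : (2:R) • L w a = u * a - a * u := by
      rw [two_smul_L hL w 1 a ha, h1v, pow_one, neg_one_mul, ← sub_eq_add_neg]
    have e2 : (2:R) • D v a = x * a + a * x := by
      rw [two_smul_D hD v 1 a ha, h1v, pow_one, neg_one_mul, sub_neg_eq_add]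
    have h10 : ((1:ZMod 2) + 1) = 0 := by decide
    rw [h10] at hLa hDa
    have e3 : (2:R) • ((2:R) • D v (L w a)) = x * ((2:R) • L w a) - ((2:R) • L w a) * x := by
      rw [two_smul_D hD v 0 _ hLa]
      have : ((0 : ZMod 2)).val = 0 := rfl
      rw [this, pow_zero, one_mul, smul_sub, mul_smul_comm, smul_mul_assoc]
    have e4 : (2:R) • ((2:R) • L w (D v a)) = u * ((2:R) • D v a) + ((2:R) • D v a) * u := by
      rw [two_smul_L hL w 0 _ hDa]
      have : ((0 : ZMod 2)).val = 0 := rfl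
      rw [this, pow_zero, one_mul, smul_add, mul_smul_comm, smul_mul_assoc]
    rw [e3, e4, e1, e2,
      show P • a + P • a = (x*(u*a) + u*(x*a)) + (a*u*x + a*x*u) by rw [r1, r2]]
    noncomm_ring

include hD in
theorem D_comp_zero (v : V) {y : CliffordAlgebra Q} (hy : y ∈ cliffordComponent ρL 0) :
    D v y = 0 := by
  obtain ⟨x, hx, rfl⟩ := hy
  rw [SetLike.mem_coe, pow_zero, Submodule.mem_one] at hx
  obtain ⟨r, rfl⟩ := hx
  rw [phi_apply, AlgHom.commutes, Module.algebraMap_end_apply, map_smul]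
  have h1 : D v (1 : CliffordAlgebra Q) = 0 := by
    rw [hD v 0 1 (SetLike.one_mem_graded _)]
    simp
  rw [h1, smul_zero]

include hL hD hρL in
theorem D_mem_comp (v : V) (j : ℕ) {y : CliffordAlgebra Q}
    (hy : y ∈ cliffordComponent ρL (j + 1)) : D v y ∈ cliffordComponent ρL j := by
  induction j generalizing y with
  | zero =>
    obtain ⟨x, hx, rfl⟩ := hy
    rw [SetLike.mem_coe, pow_succ'] at hx
    refine Submodule.mul_induction_on hx ?_ ?_
    · rintro m ⟨w, rfl⟩ n hn
      rw [← L_phi hρL]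
      have hn0 : cliffordPhi ρL n ∈ cliffordComponent ρL 0 := ⟨n, hn, rfl⟩
      have he : cliffordPhi ρL n ∈ evenOdd Q ((0:ℕ) : ZMod 2) :=
        comp_le_evenOdd hL hρL 0 hn0
      rw [D_L_anticomm hL hD v w _ _ (by exact_mod_cast he),
        D_comp_zero hD v hn0, map_zero, sub_zero]
      exact Submodule.smul_mem _ _ hn0
    · intro a b ha hb
      rw [map_add, map_add]
      exact Submodule.add_mem _ ha hb
  | succ j ih =>
    obtain ⟨x, hx, rfl⟩ := hy
    rw [SetLike.mem_coe, pow_succ'] at hx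
    refine Submodule.mul_induction_on hx ?_ ?_
    · rintro m ⟨w, rfl⟩ n hn
      rw [← L_phi hρL]
      have hn0 : cliffordPhi ρL n ∈ cliffordComponent ρL (j + 1) := ⟨n, hn, rfl⟩
      have he : cliffordPhi ρL n ∈ evenOdd Q (((j:ℕ) + 1 : ℕ) : ZMod 2) :=
        comp_le_evenOdd hL hρL (j+1) hn0
      rw [D_L_anticomm hL hD v w _ _ he]
      refine Submodule.sub_mem _ (Submodule.smul_mem _ _ hn0) ?_
      exact L_mem_comp hρL (ih hn0)
    · intro a b ha hb
      rw [map_add, map_add]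
      exact Submodule.add_mem _ ha hb

include hρL in
omit [Invertible (2:R)] in
theorem L_mem_Cz (v : V) {i : ℤ} {y : CliffordAlgebra Q} (hy : y ∈ Cz (Q := Q) ρL i) :
    L v y ∈ Cz (Q := Q) ρL (i + 1) := by
  rcases le_or_gt 0 i with h | h
  · rw [Cz, if_pos h] at hy
    rw [Cz, if_pos (by omega), show (i+1).toNat = i.toNat + 1 by omega]
    exact L_mem_comp hρL hy
  · rw [Cz_neg h, Submodule.mem_bot] at hy
    rw [hy, map_zero]
    exact Submodule.zero_mem _

include hL hD hρL in
theorem D_mem_Cz (v : V) {i : ℤ} {y : CliffordAlgebra Q} (hy : y ∈ Cz (Q := Q) ρL i) :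
    D v y ∈ Cz (Q := Q) ρL (i - 1) := by
  rcases lt_trichotomy i 0 with h | h | h
  · rw [Cz_neg h, Submodule.mem_bot] at hy
    rw [hy, map_zero]
    exact Submodule.zero_mem _
  · subst h
    rw [Cz, if_pos le_rfl] at hy
    rw [show (0:ℤ) - 1 = -1 by omega, Cz_neg (by omega), Submodule.mem_bot]
    exact D_comp_zero hD v hy
  · rw [Cz, if_pos (by omega)] at hy
    rw [Cz, if_pos (by omega)]
    have : i.toNat = (i - 1).toNat + 1 := by omega
    rw [this] at hy
    exact D_mem_comp hL hD hρL v _ hy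

include hL hD hρL in
theorem iota_mul_Cz (v : V) {i : ℤ} {y : CliffordAlgebra Q} (hy : y ∈ Cz (Q := Q) ρL i) :
    ι Q v * y = L v y + D v y := by
  rcases le_or_gt 0 i with h | h
  · rw [Cz, if_pos h] at hy
    have he : y ∈ evenOdd Q ((i.toNat : ℕ) : ZMod 2) := comp_le_evenOdd hL hρL i.toNat hy
    apply smul2_cancel (R := R)
    rw [smul_add, two_smul_L hL v _ y he, two_smul_D hD v _ y he, two_smul]
    abel
  · rw [Cz_neg h, Submodule.mem_bot] at hy
    simp [hy]

omit [Invertible (2:R)] in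
theorem sum_shift (f : ℤ → CliffordAlgebra Q) (a b c : ℤ) :
    ∑ i ∈ Finset.Icc a b, f (i + c) = ∑ i ∈ Finset.Icc (a + c) (b + c), f i := by
  refine Finset.sum_nbij' (fun i => i + c) (fun i => i - c) ?_ ?_ ?_ ?_ ?_ <;>
    simp only [Finset.mem_Icc] <;> intros <;> first | omega | trivial

omit [Invertible (2:R)] in
theorem sum_extend {z : ℤ → CliffordAlgebra Q} {a b a' b' : ℤ}
    (hlo : ∀ i, i < a → z i = 0) (hhi : ∀ i, b < i → z i = 0)
    (ha : a' ≤ a) (hb : b ≤ b') :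
    ∑ i ∈ Finset.Icc a b, z i = ∑ i ∈ Finset.Icc a' b', z i := by
  refine Finset.sum_subset (Finset.Icc_subset_Icc ha hb) ?_
  intro x hx hx'
  simp only [Finset.mem_Icc] at hx hx'
  rcases (by omega : x < a ∨ b < x) with h | h
  · exact hlo x h
  · exact hhi x h

omit [Invertible (2:R)] in
theorem sum_shift_sub (f : ℤ → CliffordAlgebra Q) (a b : ℤ) :
    ∑ i ∈ Finset.Icc a b, f (i - 1) = ∑ i ∈ Finset.Icc (a - 1) (b - 1), f i := by
  refine Finset.sum_nbij' (fun i => i - 1) (fun i => i + 1) ?_ ?_ ?_ ?_ ?_ <;>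
    simp only [Finset.mem_Icc] <;> intros <;> first | omega | trivial

omit [Invertible (2:R)] in
theorem sum_shift_add (f : ℤ → CliffordAlgebra Q) (a b : ℤ) :
    ∑ i ∈ Finset.Icc a b, f (i + 1) = ∑ i ∈ Finset.Icc (a + 1) (b + 1), f i := by
  refine Finset.sum_nbij' (fun i => i + 1) (fun i => i - 1) ?_ ?_ ?_ ?_ ?_ <;>
    simp only [Finset.mem_Icc] <;> intros <;> first | omega | trivial

include hL hD hρL hρD in
theorem main_decomp (p : ℕ) :
    ∀ (q : ℕ) (ξ : ExteriorAlgebra R V), ξ ∈ Λι ^ p →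
    ∀ (y : CliffordAlgebra Q), y ∈ cliffordComponent ρL q →
    ∃ z : ℤ → CliffordAlgebra Q,
      (∀ i, z i ∈ Cz (Q := Q) ρL i) ∧
      (∀ i, i < (q:ℤ) - p → z i = 0) ∧
      (∀ i, (q:ℤ) + p < i → z i = 0) ∧
      z ((q:ℤ) + p) = ρL ξ y ∧
      z ((q:ℤ) - p) = ρD ξ y ∧
      cliffordPhi ρL ξ * y = ∑ i ∈ Finset.Icc ((q:ℤ) - p) ((q:ℤ) + p), z i := by
  induction p using Nat.strong_induction_on with
  | _ p IH =>
  match p with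
  | 0 =>
    intro q ξ hξ y hy
    rw [pow_zero, Submodule.mem_one] at hξ
    obtain ⟨r, rfl⟩ := hξ
    refine ⟨fun i => if i = (q:ℤ) then r • y else 0, ?_, ?_, ?_, ?_, ?_, ?_⟩
    · intro i
      beta_reduce
      by_cases h : i = (q:ℤ)
      · subst h; rw [if_pos rfl, Cz_natCast]; exact Submodule.smul_mem _ _ hy
      · rw [if_neg h]; exact Submodule.zero_mem _
    · intro i hi
      beta_reduce
      rw [if_neg (by push_cast at hi ⊢; omega)]
    · intro i hi
      beta_reduce
      rw [if_neg (by push_cast at hi ⊢; omega)]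
    · beta_reduce
      simp only [Nat.cast_zero, add_zero, if_pos rfl, if_true]
      rw [AlgHom.commutes, Module.algebraMap_end_apply]
    · beta_reduce
      simp only [Nat.cast_zero, sub_zero, if_pos rfl, if_true]
      rw [AlgHom.commutes, Module.algebraMap_end_apply]
    · simp only [Nat.cast_zero, add_zero, sub_zero, Finset.Icc_self,
        Finset.sum_singleton, if_pos rfl, if_true]
      rw [phi_apply, AlgHom.commutes, Module.algebraMap_end_apply, smul_mul_assoc, one_mul]
  | p' + 1 =>
    intro q ξ hξ y hy
    rw [pow_succ'] at hξ
    refine Submodule.mul_induction_on hξ ?_ ?_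
    · rintro m ⟨v, rfl⟩ η hη
      obtain ⟨z, hzm, hzlo, hzhi, hztop, hzbot, hzsum⟩ := IH p' (by omega) q η hη y hy
      have hφη : cliffordPhi ρL η ∈ cliffordComponent ρL p' := ⟨η, hη, rfl⟩
      obtain ⟨w, hwm, hwlo, hwhi, hwsum⟩ :
          ∃ w : ℤ → CliffordAlgebra Q,
            (∀ i, w i ∈ Cz (Q := Q) ρL i) ∧
            (∀ i, i < (q:ℤ) - p' + 1 → w i = 0) ∧
            (∀ i, (q:ℤ) + p' - 1 < i → w i = 0) ∧
            D v (cliffordPhi ρL η) * y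
              = ∑ i ∈ Finset.Icc ((q:ℤ) - p' - 1) ((q:ℤ) + p' + 1), w i := by
        cases p' with
        | zero =>
          refine ⟨0, by simp [Cz], by simp, by simp, ?_⟩
          rw [D_comp_zero hD v hφη, zero_mul]
          simp
        | succ p'' =>
          have hDφ : D v (cliffordPhi ρL η) ∈ cliffordComponent ρL p'' :=
            D_mem_comp hL hD hρL v p'' hφη
          obtain ⟨η', hη', hφη'⟩ := hDφ
          obtain ⟨w, hwm, hwlo, hwhi, _, _, hwsum⟩ := IH p'' (by omega) q η' hη' y hy
          refine ⟨w, hwm, fun i hi => hwlo i (by push_cast at hi ⊢; omega),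
            fun i hi => hwhi i (by push_cast at hi ⊢; omega), ?_⟩
          rw [← hφη', hwsum]
          refine sum_extend (fun i hi => hwlo i hi) (fun i hi => hwhi i hi)
            (by push_cast; omega) (by push_cast; omega)
      have hzCz : ∀ i : ℤ, z i ∈ Cz (Q := Q) ρL i := hzm
      refine ⟨fun i => L v (z (i - 1)) + D v (z (i + 1)) - w i, ?_, ?_, ?_, ?_, ?_, ?_⟩
      · intro i
        beta_reduce
        refine Submodule.sub_mem _ (Submodule.add_mem _ ?_ ?_) (hwm i)
        · have := L_mem_Cz hρL v (hzm (i - 1))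
          rwa [sub_add_cancel] at this
        · have := D_mem_Cz hL hD hρL v (hzm (i + 1))
          rwa [add_sub_cancel_right] at this
      · intro i hi
        beta_reduce
        rw [hzlo (i - 1) (by push_cast at hi ⊢; omega), map_zero,
          hzlo (i + 1) (by push_cast at hi ⊢; omega), map_zero,
          hwlo i (by push_cast at hi ⊢; omega)]
        simp
      · intro i hi
        beta_reduce
        rw [hzhi (i - 1) (by push_cast at hi ⊢; omega), map_zero,
          hzhi (i + 1) (by push_cast at hi ⊢; omega), map_zero,
          hwhi i (by push_cast at hi ⊢; omega)]
        simp
      · beta_reduce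
        have e1 : (q:ℤ) + ((p' + 1 : ℕ) : ℤ) - 1 = (q:ℤ) + p' := by push_cast; ring
        rw [e1, hztop,
          hzhi ((q:ℤ) + ((p' + 1 : ℕ) : ℤ) + 1) (by push_cast; omega), map_zero, add_zero,
          hwhi ((q:ℤ) + ((p' + 1 : ℕ) : ℤ)) (by push_cast; omega), sub_zero,
          map_mul, hρL]
        rfl
      · beta_reduce
        have e1 : (q:ℤ) - ((p' + 1 : ℕ) : ℤ) + 1 = (q:ℤ) - p' := by push_cast; ring
        rw [e1, hzbot,
          hzlo ((q:ℤ) - ((p' + 1 : ℕ) : ℤ) - 1) (by push_cast; omega), map_zero, zero_add,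
          hwlo ((q:ℤ) - ((p' + 1 : ℕ) : ℤ)) (by push_cast; omega), sub_zero,
          map_mul, hρD]
        rfl
      · have hIcc : Finset.Icc ((q:ℤ) - ((p' + 1 : ℕ) : ℤ)) ((q:ℤ) + ((p' + 1 : ℕ) : ℤ))
            = Finset.Icc ((q:ℤ) - p' - 1) ((q:ℤ) + p' + 1) := by
          congr 1 <;> push_cast <;> ring
        rw [hIcc, ← L_phi hρL]
        have hφηCz : cliffordPhi ρL η ∈ Cz (Q := Q) ρL (p' : ℤ) := by
          rw [Cz_natCast]; exact hφη
        have hsplit : L v (cliffordPhi ρL η)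
            = ι Q v * cliffordPhi ρL η - D v (cliffordPhi ρL η) := by
          rw [iota_mul_Cz hL hD hρL v hφηCz]; abel
        rw [hsplit, sub_mul, mul_assoc, hzsum, Finset.mul_sum, hwsum]
        have hterm : ∀ i ∈ Finset.Icc ((q:ℤ) - p') ((q:ℤ) + p'),
            ι Q v * z i = L v (z i) + D v (z i) :=
          fun i _ => iota_mul_Cz hL hD hρL v (hzm i)
        rw [Finset.sum_congr rfl hterm, Finset.sum_add_distrib]
        have hL0 : ∀ i : ℤ, i < (q:ℤ) - p' → L v (z i) = 0 :=
          fun i hi => by rw [hzlo i hi, map_zero]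
        have hL1 : ∀ i : ℤ, (q:ℤ) + p' < i → L v (z i) = 0 :=
          fun i hi => by rw [hzhi i hi, map_zero]
        have hD0 : ∀ i : ℤ, i < (q:ℤ) - p' → D v (z i) = 0 :=
          fun i hi => by rw [hzlo i hi, map_zero]
        have hD1 : ∀ i : ℤ, (q:ℤ) + p' < i → D v (z i) = 0 :=
          fun i hi => by rw [hzhi i hi, map_zero]
        rw [Finset.sum_sub_distrib, Finset.sum_add_distrib,
          sum_shift_sub (fun i => L v (z i)), sum_shift_add (fun i => D v (z i))]
        rw [show ((q:ℤ) - p' - 1) - 1 = (q:ℤ) - p' - 2 by ring,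
          show ((q:ℤ) + p' + 1) - 1 = (q:ℤ) + p' by ring,
          show ((q:ℤ) - p' - 1) + 1 = (q:ℤ) - p' by ring,
          show ((q:ℤ) + p' + 1) + 1 = (q:ℤ) + p' + 2 by ring]
        rw [← sum_extend hL0 hL1 (by omega : (q:ℤ) - p' - 2 ≤ (q:ℤ) - p') (le_refl ((q:ℤ) + p')),
          ← sum_extend hD0 hD1 (le_refl ((q:ℤ) - p')) (by omega : (q:ℤ) + p' ≤ (q:ℤ) + p' + 2)]
    · rintro ξ₁ ξ₂ ⟨z₁, h1m, h1lo, h1hi, h1top, h1bot, h1sum⟩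
        ⟨z₂, h2m, h2lo, h2hi, h2top, h2bot, h2sum⟩
      refine ⟨fun i => z₁ i + z₂ i, fun i => Submodule.add_mem _ (h1m i) (h2m i),
        fun i hi => by show z₁ i + z₂ i = 0; rw [h1lo i hi, h2lo i hi, add_zero],
        fun i hi => by show z₁ i + z₂ i = 0; rw [h1hi i hi, h2hi i hi, add_zero], ?_, ?_, ?_⟩
      · beta_reduce
        rw [map_add, LinearMap.add_apply, h1top, h2top]
      · beta_reduce
        rw [map_add, LinearMap.add_apply, h1bot, h2bot]
      · rw [map_add, add_mul, h1sum, h2sum, Finset.sum_add_distrib]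

end Aux


/-- For `ξ ∈ Λ^p(V)` and `y ∈ Cl^q(Q)` one has
`Π^{p+q}(φ(ξ)·y) = L_ξ(y)` and `Π^{q−p}(φ(ξ)·y) = D_ξ(y)`. -/
theorem clifford_product_projections
    {R : Type*} [CommRing R] [Invertible (2 : R)]
    {V : Type*} [AddCommGroup V] [Module R V] [Module.Free R V] [Module.Finite R V]
    (Q : QuadraticForm R V)
    (L D : V →ₗ[R] Module.End R (CliffordAlgebra Q))
    (hL : ∀ (v : V) (i : ZMod 2) (a : CliffordAlgebra Q), a ∈ evenOdd Q i →
      L v a = ⅟(2 : R) • (ι Q v * a + (-1 : CliffordAlgebra Q) ^ i.val * (a * ι Q v)))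
    (hD : ∀ (v : V) (i : ZMod 2) (a : CliffordAlgebra Q), a ∈ evenOdd Q i →
      D v a = ⅟(2 : R) • (ι Q v * a - (-1 : CliffordAlgebra Q) ^ i.val * (a * ι Q v)))
    (ρL ρD : ExteriorAlgebra R V →ₐ[R] Module.End R (CliffordAlgebra Q))
    (hρL : ∀ v : V, ρL (ExteriorAlgebra.ι R v) = L v)
    (hρD : ∀ v : V, ρD (ExteriorAlgebra.ι R v) = D v)
    -- the projections `Π^i : Cl(Q) → Cl^i(Q)` (with `Π^i = 0` for `i < 0`)
    (Pi : ℤ → Module.End R (CliffordAlgebra Q))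
    (hPi : ∀ (i : ℤ) (j : ℕ) (a : CliffordAlgebra Q), a ∈ cliffordComponent ρL j →
      Pi i a = if i = (j : ℤ) then a else 0)
    (p q : ℕ) (ξ : ExteriorAlgebra R V)
    (hξ : ξ ∈ LinearMap.range (ExteriorAlgebra.ι R : V →ₗ[R] ExteriorAlgebra R V) ^ p)
    (y : CliffordAlgebra Q) (hy : y ∈ cliffordComponent ρL q) :
    Pi ((p : ℤ) + q) (ρL ξ 1 * y) = ρL ξ y ∧
    Pi ((q : ℤ) - p) (ρL ξ 1 * y) = ρD ξ y := by
  obtain ⟨z, hzm, hzlo, hzhi, hztop, hzbot, hzsum⟩ :=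
    main_decomp hL hD hρL hρD p q ξ hξ y hy
  rw [phi_apply] at hzsum
  have hcell : ∀ c : ℤ, ∀ i ∈ Finset.Icc ((q:ℤ) - p) ((q:ℤ) + p),
      Pi c (z i) = if c = i then z i else 0 := by
    intro c i _
    rcases le_or_gt 0 i with h | h
    · have hm := hzm i
      rw [Cz, if_pos h] at hm
      rw [hPi c i.toNat _ hm, Int.toNat_of_nonneg h]
    · have hm := hzm i
      rw [Cz_neg (hi := h), Submodule.mem_bot] at hm
      rw [hm, map_zero]
      simp
  constructor
  · rw [show ((p:ℤ) + q) = ((q:ℤ) + p) by ring, hzsum, map_sum,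
      Finset.sum_congr rfl (hcell ((q:ℤ) + p)), Finset.sum_ite_eq,
      if_pos (Finset.mem_Icc.mpr ⟨by omega, by omega⟩), hztop]
  · rw [hzsum, map_sum,
      Finset.sum_congr rfl (hcell ((q:ℤ) - p)), Finset.sum_ite_eq,
      if_pos (Finset.mem_Icc.mpr ⟨by omega, by omega⟩), hzbot]
end
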